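/- Let F ∈ ℂ[x] have multiplicity vector μ (a partition of n = deg F). Then for every partition λ of n with μ̄ ≺_lex λ (λ strictly greater than the conjugate of μ in lexicographic order), the λ-discriminant D(λ) of F vanishes: D(λ) = 0. -/

import Mathlib

open Polynomial

/-- The determinant polynomial of a list `L` of `N` polynomials (of degree `≤ N−1`). -/
noncomputable def dpList {R : Type*} [CommRing R] (L : List (Polynomial R)) : R :=
  Matrix.det (Matrix.of fun i j : Fin L.length => (L.get i).coeff (L.length - 1 - (j : ℕ)))

/-- The stack of rows `F^{(i)}·x^{Γᵢ−1}, …, F^{(i)}·x^0` for `i = 0, …`. -/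
noncomputable def stackRows {R : Type*} [CommRing R] (F : Polynomial R) (Γ : List ℕ) :
    List (Polynomial R) :=
  (Γ.zipIdx.map Prod.swap).flatMap fun ig => ((List.range ig.2).reverse).map fun e => derivative^[ig.1] F * X ^ e

/-- The `γ`-discriminant `D(γ)` of `F`. -/
noncomputable def Ddisc (F : Polynomial ℂ) (γ : List ℕ) : ℂ :=
  (F.coeff F.natDegree)⁻¹ * dpList (stackRows F ((γ.headI - 1) :: γ))

/-- A partition of `n`: a weakly decreasing list of positive integers summing to `n`. -/
def IsPartition (γ : List ℕ) (n : ℕ) : Prop :=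
  γ.Pairwise (· ≥ ·) ∧ (∀ x ∈ γ, 0 < x) ∧ γ.sum = n

lemma dpList_eq_zero_of_prefix (A B : List (Polynomial ℂ)) (G : Polynomial ℂ)
    (K : ℕ) (hKA : K < A.length)
    (hdvd : ∀ p ∈ A, ∃ q, p = G * q ∧ q.degree < (K : ℕ)) :
    dpList (A ++ B) = 0 := by
  classical
  set L := A ++ B with hL
  have hle : A.length ≤ L.length := by simp [hL]
  have hsel : ∀ i : Fin A.length, ∃ q, A.get i = G * q ∧ q.degree < (K : ℕ) :=
    fun i => hdvd (A.get i) (A.get_mem i)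
  choose qq hq1 hq2 using hsel
  set qv : Fin A.length → degreeLT ℂ K := fun i => ⟨qq i, mem_degreeLT.2 (hq2 i)⟩ with hqv
  have : Module.Finite ℂ (degreeLT ℂ K) := Module.Finite.equiv (degreeLTEquiv ℂ K).symm
  have hfr : Module.finrank ℂ (degreeLT ℂ K) = K := by
    rw [(degreeLTEquiv ℂ K).finrank_eq]; simp
  have hnli : ¬ LinearIndependent ℂ qv := by
    intro hli
    have := hli.fintype_card_le_finrank
    rw [hfr, Fintype.card_fin] at this
    omega
  obtain ⟨g, hgsum, i0, hi0⟩ := Fintype.not_linearIndependent_iff.mp hnli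
  have hpoly : ∑ i, g i • qq i = (0 : Polynomial ℂ) := by
    have := congrArg (Subtype.val) hgsum
    simpa [hqv] using this
  have hcomb : ∑ i : Fin A.length, g i • A.get i = 0 := by
    calc ∑ i : Fin A.length, g i • A.get i = ∑ i : Fin A.length, G * (g i • qq i) := by
          refine Finset.sum_congr rfl fun i _ => ?_
          rw [hq1 i, mul_smul_comm]
      _ = G * ∑ i, g i • qq i := by rw [Finset.mul_sum]
      _ = 0 := by rw [hpoly, mul_zero]
  set v : Fin L.length → ℂ := fun i => if h : (i : ℕ) < A.length then g ⟨i, h⟩ else 0 with hv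
  have hv0 : v ≠ 0 := by
    intro h
    apply hi0
    have := congrFun h (Fin.castLE hle i0)
    simpa [hv] using this
  rw [dpList, ← Matrix.exists_vecMul_eq_zero_iff]
  refine ⟨v, hv0, ?_⟩
  funext j
  have key : ∀ w : ℕ, ∑ i : Fin L.length, v i * (L.get i).coeff w = 0 := by
    intro w
    have hsub : ∑ i : Fin L.length, v i * (L.get i).coeff w
        = ∑ i ∈ Finset.univ.map (Fin.castLEEmb hle), v i * (L.get i).coeff w := by
      refine (Finset.sum_subset (Finset.subset_univ _) fun i _ hi => ?_).symm
      have : ¬ ((i : ℕ) < A.length) := by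
        intro hlt
        exact hi (Finset.mem_map.2 ⟨⟨i, hlt⟩, Finset.mem_univ _, by ext; rfl⟩)
      simp [hv, this]
    rw [hsub, Finset.sum_map]
    have hterm : ∀ i : Fin A.length,
        v ((Fin.castLEEmb hle) i) * (L.get ((Fin.castLEEmb hle) i)).coeff w
          = g i * (A.get i).coeff w := by
      intro i
      have h1 : v (Fin.castLE hle i) = g i := by simp [hv]
      have h2 : L.get (Fin.castLE hle i) = A.get i := by
        simp only [hL, List.get_eq_getElem]
        exact List.getElem_append_left i.isLt
      show v (Fin.castLE hle i) * (L.get (Fin.castLE hle i)).coeff w = _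
      rw [h1, h2]
    rw [Finset.sum_congr rfl fun i _ => hterm i]
    have := congrArg (fun p : Polynomial ℂ => p.coeff w) hcomb
    simpa [Polynomial.finset_sum_coeff, Polynomial.coeff_smul, smul_eq_mul] using this
  have : (Matrix.vecMul v (Matrix.of fun i j : Fin L.length =>
      (L.get i).coeff (L.length - 1 - (j : ℕ)))) j
      = ∑ i : Fin L.length, v i * (L.get i).coeff (L.length - 1 - (j : ℕ)) := by
    simp [Matrix.vecMul, dotProduct]
  rw [this]
  simpa using key _

lemma sum_min {m : ℕ} (μ : Fin m → ℕ) (M : ℕ) :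
    ∑ i ∈ Finset.range M, (Finset.univ.filter fun j => i + 1 ≤ μ j).card
      = ∑ j, min (μ j) M := by
  simp_rw [Finset.card_filter]
  rw [Finset.sum_comm]
  refine Finset.sum_congr rfl fun j _ => ?_
  rw [← Finset.card_filter]
  have : (Finset.range M).filter (fun i => i + 1 ≤ μ j) = Finset.range (min (μ j) M) := by
    ext i; simp [Finset.mem_filter, Finset.mem_range]; omega
  rw [this, Finset.card_range]

lemma lex_structure {l1 l2 : List ℕ} (h : List.Lex (· < ·) l1 l2) :
    (∃ v, l2 = l1 ++ v ∧ v ≠ []) ∨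
    ∃ c a b u v, a < b ∧ l1 = c ++ a :: u ∧ l2 = c ++ b :: v := by
  induction h with
  | nil => exact Or.inl ⟨_, rfl, List.cons_ne_nil _ _⟩
  | @cons a l1' l2' h ih =>
    rcases ih with ⟨v, hv, hvne⟩ | ⟨c, a', b, u, v, hab, h1, h2⟩
    · exact Or.inl ⟨v, by rw [hv]; rfl, hvne⟩
    · exact Or.inr ⟨a :: c, a', b, u, v, hab, by rw [h1]; rfl, by rw [h2]; rfl⟩
  | @rel a l1' b l2' h => exact Or.inr ⟨[], a, b, l1', l2', h, rfl, rfl⟩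

lemma le_headI_of_sorted {l : List ℕ} (hs : l.Pairwise (· ≥ ·)) {x : ℕ} (hx : x ∈ l) :
    x ≤ l.headI := by
  cases l with
  | nil => cases hx
  | cons y t =>
    rcases List.mem_cons.1 hx with rfl | hx
    · exact le_rfl
    · exact (List.pairwise_cons.mp hs).1 x hx

lemma length_stackRows {R : Type*} [CommRing R] (F : Polynomial R) (Γ : List ℕ) :
    (stackRows F Γ).length = Γ.sum := by
  rw [stackRows, List.length_flatMap]
  have : (List.map (List.length ∘ fun ig : ℕ × ℕ =>
      ((List.range ig.2).reverse).map fun e => derivative^[ig.1] F * X ^ e) (Γ.zipIdx.map Prod.swap))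
      = List.map Prod.snd (Γ.zipIdx.map Prod.swap) := by
    refine List.map_congr_left fun ig _ => ?_
    simp
  simp only [Function.comp_def] at this
  rw [this]
  simp
  rw [show (Prod.snd ∘ Prod.swap : ℕ × ℕ → ℕ) = Prod.fst from rfl, List.zipIdx_map_fst]

/-- Let `F = a(x−r₁)^{μ₁}⋯(x−r_m)^{μ_m}` with distinct roots and
weakly decreasing multiplicities `μ` summing to `n = deg F`.  Then for every
partition `λ` of `n` that is strictly greater than the conjugate `μ̄` in the
lexicographic order, the `λ`-discriminant of `F` vanishes: `D(λ) = 0`. -/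
theorem Ddisc_eq_zero_of_lex_gt (n m : ℕ) (hm : 1 ≤ m) (μ : Fin m → ℕ)
    (hanti : Antitone μ) (hpos : ∀ j, 1 ≤ μ j) (hsum : ∑ j, μ j = n)
    (r : Fin m → ℂ) (hr : Function.Injective r) (a : ℂ) (ha : a ≠ 0)
    (F : Polynomial ℂ) (hF : F = C a * ∏ j : Fin m, (X - C (r j)) ^ μ j)
    (lam : List ℕ) (hlam : IsPartition lam n)
    (hlex : List.Lex (· < ·)
      ((List.range (μ ⟨0, hm⟩)).map fun i =>
        (Finset.univ.filter fun j => i + 1 ≤ μ j).card) lam) :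
    Ddisc F lam = 0 := by
  classical
  obtain ⟨hsort, hposl, hsuml⟩ := hlam
  have hn : 1 ≤ n := by
    have h0 : 0 < ∑ j, μ j := Finset.sum_pos (fun j _ => hpos j) ⟨⟨0, hm⟩, Finset.mem_univ _⟩
    omega
  set f : ℕ → ℕ := fun i => (Finset.univ.filter fun j => i + 1 ≤ μ j).card with hf
  set M0 := μ ⟨0, hm⟩ with hM0
  have hjM0 : ∀ j, μ j ≤ M0 := fun j => hanti (by simp [Fin.le_def])
  have hsum_mubar : ((List.range M0).map f).sum = n := by
    have h1 : ((List.range M0).map f).sum = ∑ i ∈ Finset.range M0, f i := rfl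
    rw [h1, sum_min μ M0, ← hsum]
    exact Finset.sum_congr rfl fun j _ => min_eq_left (hjM0 j)
  rcases lex_structure hlex with ⟨v', hv', hvne⟩ | ⟨c, aa, b, u, v, hab, hmu, hlam2⟩
  · -- prefix case: contradiction with sums
    exfalso
    obtain ⟨x, hx⟩ := List.exists_mem_of_ne_nil v' hvne
    have hx1 : 0 < x := hposl x (by rw [hv']; exact List.mem_append_right _ hx)
    have hx2 : x ≤ v'.sum := List.single_le_sum (fun y _ => Nat.zero_le y) x hx
    have := hsuml
    rw [hv', List.sum_append, hsum_mubar] at this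
    omega
  · subst hlam2
    set lam := c ++ b :: v with hlamdef
    set h1 := lam.headI with hh1
    have hlamne : lam ≠ [] := by simp [hlamdef]
    have hh1mem : h1 ∈ lam := by
      rw [hh1, hlamdef]
      cases c with
      | nil => exact List.mem_cons_self
      | cons x t => exact List.mem_cons_self
    have hh1pos : 1 ≤ h1 := hposl _ hh1mem
    have hble : b ≤ h1 := le_headI_of_sorted hsort (by simp [hlamdef])
    set d := c.length with hd
    set i0 := d + 1 with hi0
    -- facts from hmu
    have hM0len : c.length + (u.length + 1) = M0 := by
      have := congrArg List.length hmu
      simpa using this.symm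
    have hi0M0 : i0 ≤ M0 := by omega
    have hca_le : c.sum + (aa + u.sum) = n := by
      have := congrArg List.sum hmu
      rw [hsum_mubar] at this
      simpa using this.symm
    have hpart : c.sum + aa = ∑ j, min (μ j) i0 := by
      have htake1 : ((List.range M0).map f).take i0 = (List.range i0).map f := by
        rw [← List.map_take, List.take_range, min_eq_left hi0M0]
      have htake2 : (c ++ aa :: u).take i0 = c ++ [aa] := by
        rw [show c ++ aa :: u = (c ++ [aa]) ++ u by simp, List.take_left' (by simp [hi0, hd])]
      have := congrArg (fun l => (l.take i0).sum) hmu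
      simp only [htake1, htake2] at this
      have h2 : ((List.range i0).map f).sum = ∑ i ∈ Finset.range i0, f i := rfl
      rw [h2, sum_min μ i0] at this
      simpa using this.symm
    -- the polynomial G
    set G : Polynomial ℂ := ∏ j, (X - C (r j)) ^ (μ j - i0) with hGdef
    have hGmon : G.Monic := monic_prod_of_monic _ _ fun j _ => (monic_X_sub_C _).pow _
    have hGdeg : G.natDegree = ∑ j, (μ j - i0) := by
      rw [hGdef, natDegree_prod _ _ fun j _ => ((monic_X_sub_C (r j)).pow _).ne_zero]
      exact Finset.sum_congr rfl fun j _ => by rw [natDegree_pow, natDegree_X_sub_C, mul_one]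
    have hdegG_add : G.natDegree + (c.sum + aa) = n := by
      rw [hGdeg, hpart, ← Finset.sum_add_distrib, ← hsum]
      exact Finset.sum_congr rfl fun j _ => by omega
    have hFdvd : ∀ j, (X - C (r j)) ^ μ j ∣ F := fun j => by
      rw [hF]
      exact (Finset.dvd_prod_of_mem _ (Finset.mem_univ j)).mul_left _
    have hGdvd : ∀ k ≤ i0, G ∣ derivative^[k] F := by
      intro k hk
      refine Finset.prod_dvd_of_coprime ?_ fun j _ => ?_
      · intro j _ j' _ hne
        exact (pairwise_coprime_X_sub_C hr hne).pow
      · exact (pow_dvd_pow _ (by omega)).trans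
          (pow_sub_dvd_iterate_derivative_of_pow_dvd k (hFdvd j))
    have hprodne : (∏ j, (X - C (r j)) ^ μ j : Polynomial ℂ) ≠ 0 :=
      (monic_prod_of_monic _ _ fun j _ => (monic_X_sub_C _).pow _).ne_zero
    have hFdeg : F.natDegree = n := by
      rw [hF, natDegree_mul (by simpa using ha) hprodne, natDegree_C,
        natDegree_prod _ _ fun j _ => ((monic_X_sub_C (r j)).pow _).ne_zero]
      rw [zero_add, ← hsum]
      exact Finset.sum_congr rfl fun j _ => by rw [natDegree_pow, natDegree_X_sub_C, mul_one]
    have hFkdeg : ∀ k, (derivative^[k] F).natDegree ≤ n - k := by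
      intro k
      have := natDegree_iterate_derivative F k
      rw [hFdeg] at this
      exact this
    -- the split
    set Γ₁ : List ℕ := (h1 - 1) :: (c ++ [b]) with hΓ₁
    set Bf : ℕ × ℕ → List (Polynomial ℂ) :=
      fun ig => ((List.range ig.2).reverse).map fun e => derivative^[ig.1] F * X ^ e with hBf
    have hsplit : stackRows F ((h1 - 1) :: lam)
        = stackRows F Γ₁ ++ ((v.zipIdx Γ₁.length).map Prod.swap).flatMap Bf := by
      rw [show ((h1 - 1) :: lam) = Γ₁ ++ v by simp [hΓ₁, hlamdef], stackRows,
        List.zipIdx_append, Nat.zero_add, List.map_append, List.flatMap_append]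
      rfl
    have hAlen : (stackRows F Γ₁).length = (h1 - 1) + (c.sum + b) := by
      rw [length_stackRows, hΓ₁]
      simp only [List.sum_cons, List.sum_append, List.sum_nil]
      omega
    set K := (h1 - 1) + (c.sum + aa) with hK
    clear_value f M0 lam h1 d i0 G K Bf
    have hKA : K < (stackRows F Γ₁).length := by omega
    have hdvd : ∀ p ∈ stackRows F Γ₁, ∃ q, p = G * q ∧ q.degree < (K : ℕ) := by
      intro p hp
      rw [stackRows, List.mem_flatMap] at hp
      obtain ⟨ig, hig, hp⟩ := hp
      obtain ⟨e, he, rfl⟩ := List.mem_map.1 hp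
      have he' : e < ig.2 := by
        rw [List.mem_reverse, List.mem_range] at he
        exact he
      have hget : Γ₁[ig.1]? = some ig.2 := by
        obtain ⟨x, hx, rfl⟩ := List.mem_map.1 hig
        exact List.mem_zipIdx_iff_getElem?.1 hx
      obtain ⟨hklt, hkeq⟩ := List.getElem?_eq_some_iff.1 hget
      have hΓ₁len : Γ₁.length = d + 2 := by simp [hΓ₁, hd]
      have hki0 : ig.1 ≤ i0 := by omega
      -- degree bound on p
      have hdp : (derivative^[ig.1] F * X ^ e).natDegree < (h1 - 1) + n := by
        have hmul : (derivative^[ig.1] F * X ^ e).natDegree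
            ≤ (derivative^[ig.1] F).natDegree + e := by
          refine (natDegree_mul_le).trans ?_
          rw [natDegree_X_pow]
        rcases Nat.eq_zero_or_pos ig.1 with hk0 | hkpos
        · have hval : ig.2 = h1 - 1 := by
            have : Γ₁[ig.1] = Γ₁[0] := by congr 1
            rw [this] at hkeq
            simpa [hΓ₁] using hkeq.symm
          have : (derivative^[ig.1] F).natDegree ≤ n := by
            have := hFkdeg ig.1
            omega
          omega
        · have hmem : ig.2 ∈ c ++ [b] := by
            obtain ⟨kk, hkk⟩ := Nat.exists_eq_add_of_lt hkpos
            have hkk' : ig.1 = kk + 1 := by omega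
            have hlt2 : kk < (c ++ [b]).length := by
              simp only [hΓ₁, List.length_cons] at hklt
              omega
            have : Γ₁[ig.1] = (c ++ [b])[kk] := by
              simp [hΓ₁, hkk']
            rw [this] at hkeq
            exact hkeq ▸ List.getElem_mem hlt2
          have hmem2 : ig.2 ∈ lam := by
            rw [hlamdef]
            rcases List.mem_append.1 hmem with h | h
            · exact List.mem_append_left _ h
            · simp only [List.mem_singleton] at h
              subst h
              simp
          have hig2 : ig.2 ≤ h1 := by
            rw [hh1]; exact le_headI_of_sorted hsort hmem2
          have := hFkdeg ig.1
          omega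
      obtain ⟨q, hq⟩ := (hGdvd ig.1 hki0).mul_right (X ^ e)
      refine ⟨q, hq, ?_⟩
      by_cases hq0 : q = 0
      · rw [hq0, degree_zero]
        exact WithBot.bot_lt_coe K
      · have hnd : (derivative^[ig.1] F * X ^ e).natDegree = G.natDegree + q.natDegree := by
          rw [hq, natDegree_mul hGmon.ne_zero hq0]
        have hqK : q.natDegree < K := by omega
        exact lt_of_le_of_lt degree_le_natDegree (by exact_mod_cast hqK)
    have hzero : dpList (stackRows F ((h1 - 1) :: lam)) = 0 := by
      rw [hsplit]
      exact dpList_eq_zero_of_prefix _ _ G K hKA hdvd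
    rw [Ddisc, ← hh1, hzero, mul_zero]
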